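/- Let R be a ring with identity, possibly non-commutative, and M a p × q matrix over R whose columns are partitioned into n blocks. If no p × p submatrix of M with columns from pairwise distinct blocks is invertible, then there exist an invertible p × p matrix Q over R and a positive integer m ≤ p such that in all but at most m − 1 of the blocks of QM, every column has its last m entries either all zero or containing at least one non-zero non-unit. -/

import Mathlib

noncomputable section StmtAux
open Classical Matrix Finset

variable {R : Type*} [Ring R] {p q n : ℕ}

/-- A pivot configuration for the block-partitioned matrix `M`. -/
structure Cfg (M : Matrix (Fin p) (Fin q) R) (b : Fin q → Fin n) (ι : Type) where
  Q : Matrix (Fin p) (Fin p) R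
  hQ : IsUnit Q
  col : ι → Fin q
  row : ι → Fin p
  hcol : Function.Injective (b ∘ col)
  hrow : Function.Injective row
  hA : ∀ (l : ι) (r : Fin p), (Q * M) r (col l) = if r = row l then 1 else 0

variable {M : Matrix (Fin p) (Fin q) R} {b : Fin q → Fin n}

/-- Row-reduction: make column `j` into the `t`-th unit vector, disturbing
neither columns that vanish at row `t` nor rows where column `j` vanishes. -/
lemma pivot_lemma (Q : Matrix (Fin p) (Fin p) R) (hQ : IsUnit Q) (j : Fin q) (t : Fin p)
    (hu : IsUnit ((Q * M) t j)) :
    ∃ Q' : Matrix (Fin p) (Fin p) R, IsUnit Q' ∧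
      (∀ r, (Q' * M) r j = if r = t then 1 else 0) ∧
      (∀ j', (Q * M) t j' = 0 → ∀ r, (Q' * M) r j' = (Q * M) r j') ∧
      (∀ r, (Q * M) r j = 0 → r ≠ t → ∀ j', (Q' * M) r j' = (Q * M) r j') := by
  set u := hu.unit with hu_def
  have hut : (↑u : R) = (Q * M) t j := hu.unit_spec
  set v : Fin p → R := fun r => (Q * M) r j * ↑u⁻¹ - if r = t then 1 else 0 with hv
  set w : Fin p → R := fun s => if s = t then 1 else 0 with hw
  have hvt : v t = 0 := by
    have h1 : v t = (Q * M) t j * ↑u⁻¹ - 1 := by simp [hv]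
    rw [h1, ← hut, Units.mul_inv, sub_self]
  set V : Matrix (Fin p) (Fin p) R := vecMulVec v w with hV
  have hVmul : ∀ {κ : Type} (X : Matrix (Fin p) κ R) (r : Fin p) (s : κ), (V * X) r s = v r * X t s := by
    intro κ X r s
    rw [mul_apply]
    rw [Finset.sum_eq_single t]
    · have : w t = 1 := by simp [hw]
      rw [hV, vecMulVec_apply, this, mul_one]
    · intro s' _ hs'
      have : w s' = 0 := by simp [hw, hs']
      rw [hV, vecMulVec_apply, this, mul_zero, zero_mul]
    · simp
  have hVV : V * V = 0 := by
    ext r s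
    rw [hVmul, hV, vecMulVec_apply, hvt]
    simp
  have hEunit : IsUnit (1 - V) := by
    refine isUnit_iff_exists.2 ⟨1 + V, ?_, ?_⟩
    · have : (1 - V) * (1 + V) = 1 - V * V := by noncomm_ring
      rw [this, hVV, sub_zero]
    · have : (1 + V) * (1 - V) = 1 - V * V := by noncomm_ring
      rw [this, hVV, sub_zero]
  set d : Fin p → R := fun r => if r = t then (↑u⁻¹ : R) else 1 with hd
  have hDunit : IsUnit (Matrix.diagonal d) := by
    refine isUnit_iff_exists.2 ⟨Matrix.diagonal (fun r => if r = t then (↑u : R) else 1), ?_, ?_⟩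
    · rw [diagonal_mul_diagonal]
      convert Matrix.diagonal_one using 2
      ext r
      by_cases hr : r = t <;> simp [hd, hr]
    · rw [diagonal_mul_diagonal]
      convert Matrix.diagonal_one using 2
      ext r
      by_cases hr : r = t <;> simp [hd, hr]
  set Q' : Matrix (Fin p) (Fin p) R := Matrix.diagonal d * ((1 - V) * Q) with hQ'def
  have key : ∀ (r : Fin p) (j' : Fin q),
      (Q' * M) r j' = d r * ((Q * M) r j' - v r * (Q * M) t j') := by
    intro r j'
    rw [hQ'def, Matrix.mul_assoc, Matrix.mul_assoc, diagonal_mul]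
    congr 1
    rw [Matrix.sub_mul, Matrix.one_mul, Matrix.sub_apply, hVmul]
  refine ⟨Q', (hDunit.mul (hEunit.mul hQ)), ?_, ?_, ?_⟩
  · intro r
    rw [key]
    have : v r * (Q * M) t j = (Q * M) r j - (if r = t then 1 else 0) * ↑u := by
      rw [hv]
      simp only [sub_mul, ← hut]
      rw [mul_assoc, Units.inv_mul, mul_one]
    rw [this]
    by_cases hr : r = t <;> simp [hr, hd, sub_sub_cancel]
  · intro j' hj' r
    rw [key, hj', mul_zero, sub_zero]
    by_cases hr : r = t <;> simp [hr, hd, hj']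
  · intro r hr hrt j'
    have hvr : v r = 0 := by simp [hv, hr, hrt]
    rw [key, hvr, zero_mul, sub_zero, hd]
    simp [hrt]

/-- There is a configuration indexed by `Fin t`. -/
def CfgP (M : Matrix (Fin p) (Fin q) R) (b : Fin q → Fin n) (t : ℕ) : Prop :=
  Nonempty (Cfg M b (Fin t))

def Cfg.comap {ι κ : Type} (C : Cfg M b κ) (f : ι → κ) (hf : Function.Injective f) :
    Cfg M b ι where
  Q := C.Q
  hQ := C.hQ
  col := C.col ∘ f
  row := C.row ∘ f
  hcol := by
    have : b ∘ (C.col ∘ f) = (b ∘ C.col) ∘ f := rfl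
    rw [this]
    exact C.hcol.comp hf
  hrow := C.hrow.comp hf
  hA := fun l r => C.hA (f l) r

lemma cfgP_of_card_le {ι : Type} [Fintype ι] (C : Cfg M b ι) (t : ℕ)
    (ht : t ≤ Fintype.card ι) : CfgP M b t := by
  have : Nonempty (Fin t ↪ ι) := by
    rw [Function.Embedding.nonempty_iff_card_le, Fintype.card_fin]
    exact ht
  obtain ⟨e⟩ := this
  exact ⟨C.comap e e.injective⟩

lemma cfgP_le (t : ℕ) (hP : CfgP M b t) : t ≤ p := by
  obtain ⟨C⟩ := hP
  have := Fintype.card_le_of_injective C.row C.hrow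
  simpa using this

lemma cfgP_zero : CfgP M b 0 :=
  ⟨⟨1, isUnit_one, Fin.elim0, Fin.elim0, fun l => l.elim0, fun l => l.elim0,
    fun l => l.elim0⟩⟩

lemma cfgP_p_false
    (h : ∀ f : Fin p → Fin q, Function.Injective (b ∘ f) → ¬ IsUnit (M.submatrix id f)) :
    ¬ CfgP M b p := by
  rintro ⟨C⟩
  set N : Matrix (Fin p) (Fin p) R := (C.Q * M).submatrix id C.col with hN
  have hNe : ∀ r l, N r l = if r = C.row l then 1 else 0 := by
    intro r l
    rw [hN, Matrix.submatrix_apply]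
    exact C.hA l r
  have hNQ : N = C.Q * M.submatrix id C.col := by
    ext r l
    simp [hN, Matrix.submatrix_apply, Matrix.mul_apply]
  have hrow_bij : Function.Bijective C.row :=
    (Fintype.bijective_iff_injective_and_card C.row).2 ⟨C.hrow, rfl⟩
  have hNunit : IsUnit N := by
    refine isUnit_iff_exists.2 ⟨Matrix.of (fun l r => if r = C.row l then 1 else 0), ?_, ?_⟩
    · ext r r'
      rw [Matrix.mul_apply]
      obtain ⟨l₀, hl₀⟩ := hrow_bij.2 r
      rw [Finset.sum_eq_single l₀]
      · rw [hNe, Matrix.of_apply, if_pos hl₀.symm, one_mul, Matrix.one_apply]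
        rw [hl₀]
        by_cases hrr : r = r'
        · rw [if_pos hrr.symm, if_pos hrr]
        · rw [if_neg (Ne.symm hrr), if_neg hrr]
      · intro l _ hl
        rw [hNe, if_neg, zero_mul]
        intro hc
        exact hl ((C.hrow (hl₀.trans hc)).symm)
      · intro hc
        exact absurd (Finset.mem_univ l₀) hc
    · ext l l'
      rw [Matrix.mul_apply]
      rw [Finset.sum_eq_single (C.row l)]
      · rw [Matrix.of_apply, if_pos rfl, one_mul, hNe, Matrix.one_apply]
        by_cases hll : l = l'
        · rw [if_pos (by rw [hll]), if_pos hll]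
        · rw [if_neg (fun hc => hll (C.hrow hc)), if_neg hll]
      · intro r _ hr
        rw [Matrix.of_apply, if_neg hr, zero_mul]
      · intro hc
        exact absurd (Finset.mem_univ _) hc
  set u := C.hQ.unit with hu
  have hinv : (Units.val u⁻¹) * C.Q = 1 := by
    rw [← C.hQ.unit_spec, ← hu, Units.inv_mul]
  have hMsub : M.submatrix id C.col = (Units.val u⁻¹) * N := by
    rw [hNQ, ← Matrix.mul_assoc, hinv, Matrix.one_mul]
  have : IsUnit (M.submatrix id C.col) := by
    rw [hMsub]
    exact (Units.isUnit u⁻¹).mul hNunit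
  exact h C.col C.hcol this

variable {k : ℕ}

/-- `r` is a window row: either a non-pivot row, or the pivot row of an index in `s`. -/
def WinP (C : Cfg M b (Fin k)) (s : Finset (Fin k)) (r : Fin p) : Prop :=
  (∀ l, r ≠ C.row l) ∨ ∃ l ∈ s, C.row l = r

/-- Column `j` is bad on the window of `s`: all window entries are zero or units,
and at least one is a unit. -/
def IsBad (C : Cfg M b (Fin k)) (s : Finset (Fin k)) (j : Fin q) : Prop :=
  (∀ r, WinP C s r → (C.Q * M) r j = 0 ∨ IsUnit ((C.Q * M) r j)) ∧
    (∃ r, WinP C s r ∧ IsUnit ((C.Q * M) r j))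

/-- The tower of stage sets. -/
def Tw (C : Cfg M b (Fin k)) : ℕ → Finset (Fin k)
  | 0 => ∅
  | i + 1 => Tw C i ∪ Finset.univ.filter (fun l => ∃ j, b j = b (C.col l) ∧ IsBad C (Tw C i) j)

lemma Tw_succ (C : Cfg M b (Fin k)) (i : ℕ) :
    Tw C (i + 1) =
      Tw C i ∪ Finset.univ.filter (fun l => ∃ j, b j = b (C.col l) ∧ IsBad C (Tw C i) j) :=
  rfl

lemma Tw_mono (C : Cfg M b (Fin k)) : Monotone (Tw C) :=
  monotone_nat_of_le_succ (fun i => by rw [Tw_succ]; exact Finset.subset_union_left)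

lemma WinP_mono {C : Cfg M b (Fin k)} {s s' : Finset (Fin k)} (hss : s ⊆ s') {r : Fin p}
    (hr : WinP C s r) : WinP C s' r := by
  rcases hr with hfr | ⟨l, hl, hlr⟩
  · exact Or.inl hfr
  · exact Or.inr ⟨l, hss hl, hlr⟩

lemma stmt_main (hk1 : ¬ CfgP M b (k + 1)) :
    ∀ (i : ℕ) (C : Cfg M b (Fin k)) (j : Fin q),
      (∀ l, b j ≠ b (C.col l)) → IsBad C (Tw C i) j → False := by
  intro i
  induction i using Nat.strong_induction_on with
  | _ i IH =>
  intro C j hj hbad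
  have hΦex : ∃ m, ∃ r, WinP C (Tw C m) r ∧ IsUnit ((C.Q * M) r j) := ⟨i, hbad.2⟩
  obtain ⟨rs, hrswin, hrsunit⟩ := Nat.find_spec hΦex
  have histar_le : Nat.find hΦex ≤ i := Nat.find_min' hΦex hbad.2
  cases h0 : Nat.find hΦex with
  | zero =>
    rw [h0] at hrswin
    have hfresh : ∀ l, rs ≠ C.row l := by
      rcases hrswin with hfr | ⟨l, hl, _⟩
      · exact hfr
      · simp [Tw] at hl
    obtain ⟨Q', hQ', P1, P2, P3⟩ := pivot_lemma C.Q C.hQ j rs hrsunit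
    refine hk1 (cfgP_of_card_le (ι := Option (Fin k))
      ⟨Q', hQ', fun o => o.elim j C.col, fun o => o.elim rs C.row, ?_, ?_, ?_⟩
      (k + 1) (by simp))
    · intro o1 o2 heq
      match o1, o2 with
      | none, none => rfl
      | none, some l => exact absurd heq (hj l)
      | some l, none => exact absurd heq.symm (hj l)
      | some l1, some l2 => exact congrArg some (C.hcol heq)
    · intro o1 o2 heq
      match o1, o2 with
      | none, none => rfl
      | none, some l => exact absurd heq (hfresh l)
      | some l, none => exact absurd heq.symm (hfresh l)
      | some l1, some l2 => exact congrArg some (C.hrow heq)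
    · intro o r
      match o with
      | none => exact P1 r
      | some l =>
        have hz : (C.Q * M) rs (C.col l) = 0 := by
          rw [C.hA l rs, if_neg (hfresh l)]
        show (Q' * M) r (C.col l) = if r = C.row l then 1 else 0
        rw [P2 (C.col l) hz r]
        exact C.hA l r
  | succ s =>
    have hs_not : ¬ ∃ r, WinP C (Tw C s) r ∧ IsUnit ((C.Q * M) r j) :=
      Nat.find_min hΦex (by omega)
    rw [h0] at hrswin
    have hnotfresh : ¬ ∀ l, rs ≠ C.row l := fun hfr => hs_not ⟨rs, Or.inl hfr, hrsunit⟩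
    obtain ⟨ls, hls_mem, hls_row⟩ : ∃ l ∈ Tw C (s + 1), C.row l = rs := by
      rcases hrswin with hfr | hex
      · exact absurd hfr hnotfresh
      · exact hex
    have hls_not : ls ∉ Tw C s :=
      fun hmem => hs_not ⟨rs, Or.inr ⟨ls, hmem, hls_row⟩, hrsunit⟩
    obtain ⟨d, hdb, hdbad⟩ : ∃ d, b d = b (C.col ls) ∧ IsBad C (Tw C s) d := by
      rw [Tw_succ, Finset.mem_union] at hls_mem
      rcases hls_mem with hmem | hmem
      · exact absurd hmem hls_not
      · exact (Finset.mem_filter.1 hmem).2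
    have czero : ∀ r, WinP C (Tw C s) r → (C.Q * M) r j = 0 := by
      intro r hr
      rcases hbad.1 r (WinP_mono (Tw_mono C (by omega : s ≤ i)) hr) with hz | hu
      · exact hz
      · exact absurd ⟨r, hr, hu⟩ hs_not
    have hrs_notwin : ¬ WinP C (Tw C s) rs := fun hw => hs_not ⟨rs, hw, hrsunit⟩
    obtain ⟨Q', hQ', P1, P2, P3⟩ := pivot_lemma C.Q C.hQ j rs hrsunit
    have hcol' : Function.Injective (b ∘ Function.update C.col ls j) := by
      intro l1 l2 heq
      simp only [Function.comp_apply] at heq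
      by_cases h1 : l1 = ls <;> by_cases h2 : l2 = ls
      · rw [h1, h2]
      · subst h1
        rw [Function.update_self, Function.update_of_ne h2] at heq
        exact absurd heq (hj l2)
      · subst h2
        rw [Function.update_self, Function.update_of_ne h1] at heq
        exact absurd heq.symm (hj l1)
      · rw [Function.update_of_ne h1, Function.update_of_ne h2] at heq
        exact C.hcol heq
    have hA' : ∀ l r, (Q' * M) r (Function.update C.col ls j l) = if r = C.row l then 1 else 0 := by
      intro l r
      by_cases hl : l = ls
      · subst hl
        rw [Function.update_self, P1 r, hls_row]
      · rw [Function.update_of_ne hl]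
        have hz : (C.Q * M) rs (C.col l) = 0 := by
          rw [C.hA l rs]
          exact if_neg (fun hc => hl (C.hrow (hls_row.trans hc)).symm)
        rw [P2 (C.col l) hz r]
        exact C.hA l r
    set C' : Cfg M b (Fin k) :=
      ⟨Q', hQ', Function.update C.col ls j, C.row, hcol', C.hrow, hA'⟩ with hC'
    have hWin' : ∀ s' r, WinP C' s' r ↔ WinP C s' r := fun s' r => Iff.rfl
    have hA'eq : ∀ r, WinP C (Tw C s) r → ∀ j', (C'.Q * M) r j' = (C.Q * M) r j' := by
      intro r hr j'
      have hrne : r ≠ rs := fun he => hrs_notwin (he ▸ hr)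
      exact P3 r (czero r hr) hrne j'
    have hbad_iff : ∀ s', s' ⊆ Tw C s → ∀ j', (IsBad C' s' j' ↔ IsBad C s' j') := by
      intro s' hs' j'
      have hw : ∀ r, WinP C s' r → (C'.Q * M) r j' = (C.Q * M) r j' :=
        fun r hr => hA'eq r (WinP_mono hs' hr) j'
      constructor
      · rintro ⟨h1, r0, hr0, hu0⟩
        have hr0' : WinP C s' r0 := (hWin' s' r0).1 hr0
        exact ⟨fun r hr => by rw [← hw r hr]; exact h1 r ((hWin' s' r).2 hr),
               ⟨r0, hr0', by rw [← hw r0 hr0']; exact hu0⟩⟩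
      · rintro ⟨h1, r0, hr0, hu0⟩
        exact ⟨fun r hr => by rw [hw r ((hWin' s' r).1 hr)]; exact h1 r ((hWin' s' r).1 hr),
               ⟨r0, (hWin' s' r0).2 hr0, by rw [hw r0 hr0]; exact hu0⟩⟩
    have TwEq : ∀ m, m ≤ s → Tw C' m = Tw C m := by
      intro m
      induction m with
      | zero => intro _; rfl
      | succ m ihm =>
        intro hm
        have hmle : m ≤ s := by omega
        have hTm := ihm hmle
        have hsub : Tw C m ⊆ Tw C s := Tw_mono C hmle
        rw [Tw_succ, Tw_succ, hTm]
        congr 1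
        ext l
        simp only [Finset.mem_filter, Finset.mem_univ, true_and]
        by_cases hl : l = ls
        · subst hl
          constructor
          · rintro ⟨j', hj'b, hj'bad⟩
            exfalso
            have hj'b2 : b j' = b j := by
              rw [hj'b, show C'.col l = j from Function.update_self _ _ _]
            have hbadC : IsBad C (Tw C m) j' := (hbad_iff _ hsub j').1 hj'bad
            exact IH m (by omega) C j' (fun l' => hj'b2 ▸ hj l') hbadC
          · rintro ⟨j', hj'b, hj'bad⟩
            exfalso
            have hmem : l ∈ Tw C (m + 1) := by
              rw [Tw_succ, Finset.mem_union]
              exact Or.inr (Finset.mem_filter.2 ⟨Finset.mem_univ _, ⟨j', hj'b, hj'bad⟩⟩)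
            exact hls_not (Tw_mono C hm hmem)
        · constructor
          · rintro ⟨j', hj'b, hj'bad⟩
            rw [show C'.col l = C.col l from Function.update_of_ne hl _ _] at hj'b
            exact ⟨j', hj'b, (hbad_iff _ hsub j').1 hj'bad⟩
          · rintro ⟨j', hj'b, hj'bad⟩
            have hupd : Function.update C.col ls j l = C.col l := Function.update_of_ne hl _ _
            exact ⟨j', by rw [show C'.col l = C.col l from hupd]; exact hj'b, (hbad_iff _ hsub j').2 hj'bad⟩
    have hd_notin : ∀ l, b d ≠ b (C'.col l) := by
      intro l
      by_cases hl : l = ls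
      · subst hl
        have hcl : C'.col l = j := Function.update_self _ _ _
        rw [hcl, hdb]
        exact fun hc => (hj l) hc.symm
      · have hcl : C'.col l = C.col l := Function.update_of_ne hl _ _
        rw [hcl, hdb]
        exact fun hc => hl (C.hcol (show (b ∘ C.col) l = (b ∘ C.col) ls from hc.symm))
    have hdbad' : IsBad C' (Tw C' s) d := by
      rw [TwEq s le_rfl]
      exact (hbad_iff _ (Finset.Subset.refl _) d).2 hdbad
    exact IH s (by omega) C' d hd_notin hdbad'

end StmtAux

/-- Main Theorem: over any ring with identity, if no transversal p×p submatrix of the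
block-partitioned M is invertible, then there are an invertible Q and 0 < m ≤ p such
that in all but at most m-1 blocks of QM, every column's last m entries are either all
zero or contain a non-zero non-unit. -/
theorem stmt_17 {R : Type*} [Ring R] {p q n : ℕ}
    (M : Matrix (Fin p) (Fin q) R) (b : Fin q → Fin n)
    (h : ∀ f : Fin p → Fin q, Function.Injective (b ∘ f) →
      ¬ IsUnit (M.submatrix id f)) :
    ∃ (Q : Matrix (Fin p) (Fin p) R) (m : ℕ), IsUnit Q ∧ 0 < m ∧ m ≤ p ∧
      ∃ S : Finset (Fin n), S.card ≤ m - 1 ∧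
        ∀ i : Fin n, i ∉ S → ∀ j : Fin q, b j = i →
          ((∀ r : Fin p, p - m ≤ (r : ℕ) → (Q * M) r j = 0) ∨
           (∃ r : Fin p, p - m ≤ (r : ℕ) ∧ (Q * M) r j ≠ 0 ∧
             ¬ IsUnit ((Q * M) r j))) := by
  classical
  have hP0 : CfgP M b 0 := cfgP_zero
  have hPp : ¬ CfgP M b p := cfgP_p_false h
  obtain ⟨k, hkdef⟩ : ∃ k, k = Nat.findGreatest (CfgP M b) p := ⟨_, rfl⟩
  have hPk : CfgP M b k := by
    rw [hkdef]
    exact Nat.findGreatest_spec (Nat.zero_le p) hP0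
  have hkle : k ≤ p := by
    rw [hkdef]
    exact Nat.findGreatest_le p
  have hklt : k < p := lt_of_le_of_ne hkle (fun he => hPp (he ▸ hPk))
  have hk1 : ¬ CfgP M b (k + 1) := by
    apply Nat.findGreatest_is_greatest (n := p)
    · rw [← hkdef]
      omega
    · omega
  obtain ⟨C⟩ := hPk
  -- fixpoint of the tower
  have hfix : ∃ i, Tw C (i + 1) = Tw C i := by
    by_contra hno
    push_neg at hno
    have hgrow : ∀ i, i ≤ (Tw C i).card := by
      intro i
      induction i with
      | zero => omega
      | succ i ih =>
        have hss : Tw C i ⊂ Tw C (i + 1) :=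
          Finset.ssubset_iff_subset_ne.2 ⟨Tw_mono C (by omega), fun he => hno i he.symm⟩
        have := Finset.card_lt_card hss
        omega
    have h1 := hgrow (k + 1)
    have h2 : (Tw C (k + 1)).card ≤ k := by
      have := Finset.card_le_univ (Tw C (k + 1))
      simpa using this
    omega
  obtain ⟨i₀, hi₀⟩ := hfix
  set T := Tw C i₀ with hT
  set S : Finset (Fin n) := Finset.image (fun l => b (C.col l)) T with hS
  have hTcard : T.card ≤ k := by
    have := Finset.card_le_univ T
    simpa using this
  set m := p - k + T.card with hm
  have hm1 : 0 < m := by omega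
  have hmp : m ≤ p := by omega
  have hScard : S.card ≤ m - 1 := by
    have h1 : S.card ≤ T.card := Finset.card_image_le
    omega
  -- no bad columns outside S
  have hgood : ∀ jc : Fin q, b jc ∉ S → ¬ IsBad C T jc := by
    intro jc hjS hbad
    by_cases hused : ∃ l, b jc = b (C.col l)
    · obtain ⟨l, hl⟩ := hused
      have hlT : l ∉ T := fun hmem => hjS (Finset.mem_image.2 ⟨l, hmem, hl.symm⟩)
      have hmem : l ∈ Tw C (i₀ + 1) := by
        rw [Tw_succ, Finset.mem_union]
        exact Or.inr (Finset.mem_filter.2 ⟨Finset.mem_univ _, ⟨jc, hl, hbad⟩⟩)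
      rw [hi₀] at hmem
      exact hlT hmem
    · push_neg at hused
      exact stmt_main hk1 i₀ C jc (fun l => hused l) hbad
  -- the window and the last-rows sets
  set WinF : Finset (Fin p) := Finset.univ.filter (fun r => WinP C T r) with hWinF
  set lastF : Finset (Fin p) := Finset.univ.filter (fun r : Fin p => p - m ≤ (r : ℕ)) with hlastF
  have hWinFcard : WinF.card = m := by
    have hunion : WinF = (Finset.univ.filter (fun r => ∀ l, r ≠ C.row l)) ∪ T.image C.row := by
      ext r
      simp only [hWinF, Finset.mem_filter, Finset.mem_univ, true_and, Finset.mem_union,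
        Finset.mem_image, WinP]
      exact ⟨fun h => ((Finset.mem_filter (p := fun r => WinP C T r)).1 h).2,
        fun h => (Finset.mem_filter (p := fun r => WinP C T r)).2 ⟨Finset.mem_univ _, h⟩⟩
    have hdisj : Disjoint (Finset.univ.filter (fun r => ∀ l, r ≠ C.row l)) (T.image C.row) := by
      rw [Finset.disjoint_left]
      intro r hr hr'
      obtain ⟨l, _, hlr⟩ := Finset.mem_image.1 hr'
      exact (Finset.mem_filter.1 hr).2 l hlr.symm
    have hc1 : (Finset.univ.filter (fun r => ∀ l, r ≠ C.row l)).card = p - k := by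
      have heq : (Finset.univ.filter (fun r => ∀ l, r ≠ C.row l)) = (Finset.univ.image C.row)ᶜ := by
        ext r
        rw [Finset.mem_filter, Finset.mem_compl]
        constructor
        · rintro ⟨-, hfr⟩ hmem
          obtain ⟨l, -, hlr⟩ := Finset.mem_image.1 hmem
          exact hfr l hlr.symm
        · intro hmem
          exact ⟨Finset.mem_univ _,
            fun l hc => hmem (Finset.mem_image.2 ⟨l, Finset.mem_univ _, hc.symm⟩)⟩
      rw [heq, Finset.card_compl, Finset.card_image_of_injective _ C.hrow]
      simp
    have hc2 : (T.image C.row).card = T.card := Finset.card_image_of_injective _ C.hrow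
    rw [hunion, Finset.card_union_of_disjoint hdisj, hc1, hc2]
  have hlastFcard : lastF.card = m := by
    have hinj : Function.Injective (fun i : Fin m => (⟨p - m + (i : ℕ), by omega⟩ : Fin p)) := by
      intro i1 i2 hi
      have h1 : p - m + (i1 : ℕ) = p - m + (i2 : ℕ) := congrArg Fin.val hi
      exact Fin.ext (by omega)
    have heq : lastF
        = Finset.univ.image (fun i : Fin m => (⟨p - m + (i : ℕ), by omega⟩ : Fin p)) := by
      ext r
      simp only [hlastF, Finset.mem_filter, Finset.mem_univ, true_and, Finset.mem_image]
      constructor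
      · intro hr
        have hlt : (r : ℕ) < p := r.isLt
        refine ⟨⟨(r : ℕ) - (p - m), by omega⟩, Fin.ext ?_⟩
        show p - m + ((r : ℕ) - (p - m)) = (r : ℕ)
        omega
      · rintro ⟨i, hi⟩
        have hlt : (i : ℕ) < m := i.isLt
        rw [← hi]
        show p - m ≤ p - m + (i : ℕ)
        omega
    rw [heq, Finset.card_image_of_injective _ hinj, Finset.card_univ, Fintype.card_fin]
  -- build the permutation
  have hcards : lastF.card = WinF.card := by rw [hlastFcard, hWinFcard]
  have hcardsc : lastFᶜ.card = WinFᶜ.card := by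
    rw [Finset.card_compl, Finset.card_compl, hcards]
  have e₁ : {x // x ∈ lastF} ≃ {x // x ∈ WinF} := Finset.equivOfCardEq hcards
  have e₂ : {x // ¬ x ∈ lastF} ≃ {x // ¬ x ∈ WinF} :=
    ((Equiv.subtypeEquivRight (fun x => (Finset.mem_compl).symm)).trans
      (Finset.equivOfCardEq hcardsc)).trans
      (Equiv.subtypeEquivRight (fun x => Finset.mem_compl))
  set σ : Equiv.Perm (Fin p) :=
    ((Equiv.sumCompl (· ∈ lastF)).symm.trans ((e₁.sumCongr e₂).trans
      (Equiv.sumCompl (· ∈ WinF)))) with hσ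
  have hσin : ∀ r, r ∈ lastF → σ r ∈ WinF := by
    intro r hr
    rw [hσ]
    simp only [Equiv.trans_apply, Equiv.sumCompl_symm_apply_of_pos hr,
      Equiv.sumCongr_apply, Sum.map_inl, Equiv.sumCompl_apply_inl]
    exact (e₁ ⟨r, hr⟩).2
  have hσout : ∀ r, r ∉ lastF → σ r ∉ WinF := by
    intro r hr
    rw [hσ]
    simp only [Equiv.trans_apply, Equiv.sumCompl_symm_apply_of_neg hr,
      Equiv.sumCongr_apply, Sum.map_inr, Equiv.sumCompl_apply_inr]
    exact (e₂ ⟨r, hr⟩).2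
  -- the permutation matrix
  set Pm : Matrix (Fin p) (Fin p) R := Matrix.of (fun r s => if s = σ r then 1 else 0) with hPm
  have hPmmul : ∀ {κ : Type} (X : Matrix (Fin p) κ R) (r : Fin p) (s : κ),
      (Pm * X) r s = X (σ r) s := by
    intro κ X r s
    rw [Matrix.mul_apply]
    rw [Finset.sum_eq_single (σ r)]
    · simp [hPm]
    · intro s' _ hs'
      simp [hPm, hs']
    · intro hc
      exact absurd (Finset.mem_univ _) hc
  have hPmunit : IsUnit Pm := by
    refine isUnit_iff_exists.2 ⟨Matrix.of (fun r s => if s = σ.symm r then 1 else 0), ?_, ?_⟩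
    · ext r s
      rw [hPmmul]
      simp only [Matrix.of_apply, Equiv.symm_apply_apply, Matrix.one_apply]
      by_cases hrs : r = s
      · rw [if_pos hrs.symm, if_pos hrs]
      · rw [if_neg (Ne.symm hrs), if_neg hrs]
    · ext r s
      rw [Matrix.mul_apply]
      rw [Finset.sum_eq_single (σ.symm r)]
      · simp [hPm, Matrix.one_apply, Equiv.eq_symm_apply, eq_comm]
      · intro s' _ hs'
        simp [hs']
      · intro hc
        exact absurd (Finset.mem_univ _) hc
  refine ⟨Pm * C.Q, m, hPmunit.mul C.hQ, hm1, hmp, S, hScard, ?_⟩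
  intro iBlk hiS jc hjc
  have hnb : ¬ IsBad C T jc := hgood jc (by rw [hjc]; exact hiS)
  have hQfM : ∀ r, ((Pm * C.Q) * M) r jc = (C.Q * M) (σ r) jc := by
    intro r
    rw [Matrix.mul_assoc]
    exact hPmmul (C.Q * M) r jc
  by_cases hz : ∀ r, WinP C T r → (C.Q * M) r jc = 0
  · left
    intro r hr
    have hrlast : r ∈ lastF := Finset.mem_filter.2 ⟨Finset.mem_univ _, hr⟩
    have hσr := hσin r hrlast
    rw [hQfM]
    exact hz (σ r) (Finset.mem_filter.1 hσr).2
  · right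
    push_neg at hz
    obtain ⟨r₁, hr₁win, hr₁ne⟩ := hz
    have hex : ∃ r₂, WinP C T r₂ ∧ (C.Q * M) r₂ jc ≠ 0 ∧ ¬ IsUnit ((C.Q * M) r₂ jc) := by
      by_contra hno
      push_neg at hno
      apply hnb
      constructor
      · intro r hr
        by_cases h0 : (C.Q * M) r jc = 0
        · exact Or.inl h0
        · exact Or.inr (hno r hr h0)
      · exact ⟨r₁, hr₁win, hno r₁ hr₁win hr₁ne⟩
    obtain ⟨r₂, hw₂, hnz₂, hnu₂⟩ := hex
    have hr₂Win : r₂ ∈ WinF := Finset.mem_filter.2 ⟨Finset.mem_univ _, hw₂⟩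
    refine ⟨σ.symm r₂, ?_, ?_, ?_⟩
    · by_contra hc
      have hlc : σ.symm r₂ ∉ lastF := fun hmem => hc (Finset.mem_filter.1 hmem).2
      have := hσout _ hlc
      rw [Equiv.apply_symm_apply] at this
      exact this hr₂Win
    · rw [hQfM, Equiv.apply_symm_apply]
      exact hnz₂
    · rw [hQfM, Equiv.apply_symm_apply]
      exact hnu₂
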